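/- arXiv:0907.1715 — 7 statements merged into one kernel-verified Lean document; each statement's English description precedes it below -/
import Mathlib

section
/- Let Q ∈ ℂ[x,y,z] be weighted-homogeneous of degree d with respect to the weights a ≤ b ≤ c, and assume d > b + c. Then the linear span of x and y meets the space of Poisson brackets trivially modulo Q: if λ, μ ∈ ℂ and λ·x + μ·y lies in the sum of the ℂ-linear span of { {f,g} : f, g ∈ ℂ[x,y,z] } and the ideal (Q), then λ = μ = 0. -/
open MvPolynomial

/-- The Jacobian Poisson bracket on `ℂ[x,y,z]` associated to `Q`:
`{f,g} = Q_x (f_y g_z − f_z g_y) + Q_y (f_z g_x − f_x g_z) + Q_z (f_x g_y − f_y g_x)`. -/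
noncomputable def jacBracket (Q f g : MvPolynomial (Fin 3) ℂ) : MvPolynomial (Fin 3) ℂ :=
  pderiv 0 Q * (pderiv 1 f * pderiv 2 g - pderiv 2 f * pderiv 1 g) +
  pderiv 1 Q * (pderiv 2 f * pderiv 0 g - pderiv 0 f * pderiv 2 g) +
  pderiv 2 Q * (pderiv 0 f * pderiv 1 g - pderiv 1 f * pderiv 0 g)

namespace JacAux

/-- The submodule of polynomials all of whose monomials have weight `> n`. -/
noncomputable def lbSub (w : Fin 3 → ℕ) (n : ℕ) : Submodule ℂ (MvPolynomial (Fin 3) ℂ) where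
  carrier := {p | ∀ m ∈ p.support, n < Finsupp.weight w m}
  add_mem' := by
    classical
    intro p q hp hq m hm
    rcases Finset.mem_union.mp (MvPolynomial.support_add hm) with h | h
    · exact hp m h
    · exact hq m h
  zero_mem' := by intro m hm; simp at hm
  smul_mem' := by
    intro c p hp m hm
    exact hp m (MvPolynomial.support_smul hm)

lemma mem_lbSub {w : Fin 3 → ℕ} {n : ℕ} {p : MvPolynomial (Fin 3) ℂ} :
    p ∈ lbSub w n ↔ ∀ m ∈ p.support, n < Finsupp.weight w m := Iff.rfl

lemma lbSub_mul_right {w : Fin 3 → ℕ} {n : ℕ} {p : MvPolynomial (Fin 3) ℂ}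
    (hp : p ∈ lbSub w n) (q : MvPolynomial (Fin 3) ℂ) : p * q ∈ lbSub w n := by
  classical
  intro m hm
  rcases Finset.mem_add.mp (MvPolynomial.support_mul p q hm) with ⟨m1, h1, m2, h2, rfl⟩
  calc n < Finsupp.weight w m1 := hp m1 h1
    _ ≤ Finsupp.weight w m1 + Finsupp.weight w m2 := Nat.le_add_right _ _
    _ = Finsupp.weight w (m1 + m2) := (map_add _ _ _).symm

lemma lbSub_mul_left {w : Fin 3 → ℕ} {n : ℕ} {q : MvPolynomial (Fin 3) ℂ}
    (hq : q ∈ lbSub w n) (p : MvPolynomial (Fin 3) ℂ) : p * q ∈ lbSub w n := by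
  rw [mul_comm]; exact lbSub_mul_right hq p

/-- Monomials of the partial derivative of a weighted-homogeneous polynomial of degree `d`
have weight `≥ d - w i`, i.e. weight plus `w i` is at least `d`. -/
lemma pderiv_weight {w : Fin 3 → ℕ} {d : ℕ} {Q : MvPolynomial (Fin 3) ℂ}
    (hQ : Q.IsWeightedHomogeneous w d) (i : Fin 3) :
    ∀ m ∈ (pderiv i Q).support, d ≤ Finsupp.weight w m + w i := by
  classical
  intro m hm
  rw [show pderiv i Q = pderiv i (∑ s ∈ Q.support, monomial s (MvPolynomial.coeff s Q)) by
        rw [MvPolynomial.support_sum_monomial_coeff]] at hm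
  rw [map_sum] at hm
  rcases Finset.mem_biUnion.mp (MvPolynomial.support_sum hm) with ⟨s, hs, hms⟩
  rw [pderiv_monomial] at hms
  have hms' := MvPolynomial.support_monomial_subset hms
  rw [Finset.mem_singleton] at hms'
  subst hms'
  -- the coefficient is nonzero, so `s i ≠ 0`
  have hsi : s i ≠ 0 := by
    intro h0
    rw [MvPolynomial.mem_support_iff] at hms
    apply hms
    rw [h0]
    simp
  have hw : Finsupp.weight w s = d := hQ (MvPolynomial.mem_support_iff.mp hs)
  have hsum : (s - Finsupp.single i 1) + Finsupp.single i 1 = s := by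
    ext j
    by_cases hj : j = i
    · subst hj; simp; omega
    · simp [Finsupp.single_apply, hj, Ne.symm hj]
  have : Finsupp.weight w (s - Finsupp.single i 1) + Finsupp.weight w (Finsupp.single i 1) = d := by
    rw [← map_add, hsum, hw]
  have hwi : Finsupp.weight w (Finsupp.single i 1) = w i := by
    simp [Finsupp.weight_apply, Finsupp.sum_single_index]
  omega

end JacAux

theorem stmt0 (a b c d : ℕ) (ha : 0 < a) (hab : a ≤ b) (hbc : b ≤ c) (hd : b + c < d)
    (Q : MvPolynomial (Fin 3) ℂ) (hQ : Q.IsWeightedHomogeneous ![a, b, c] d)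
    (l m : ℂ)
    (hmem : (C l * X 0 + C m * X 1 : MvPolynomial (Fin 3) ℂ) ∈
      Submodule.span ℂ {p : MvPolynomial (Fin 3) ℂ | ∃ f g, jacBracket Q f g = p} ⊔
        (Ideal.span {Q}).restrictScalars ℂ) :
    l = 0 ∧ m = 0 := by
  classical
  set w : Fin 3 → ℕ := ![a, b, c] with hw
  have hw0 : w 0 = a := rfl
  have hw1 : w 1 = b := rfl
  have hw2 : w 2 = c := rfl
  -- every bracket and every multiple of Q lies in `lbSub w b`
  have hK : (C l * X 0 + C m * X 1 : MvPolynomial (Fin 3) ℂ) ∈ JacAux.lbSub w b := by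
    refine (sup_le ?_ ?_ : _ ≤ JacAux.lbSub w b) hmem
    · rw [Submodule.span_le]
      rintro p ⟨f, g, rfl⟩
      have hwle : ∀ i : Fin 3, w i ≤ c := by
        intro i
        fin_cases i <;> simp [hw0, hw1, hw2] <;> omega
      have key : ∀ i : Fin 3, pderiv i Q ∈ JacAux.lbSub w b := by
        intro i
        intro mm hmm
        have := JacAux.pderiv_weight hQ i mm hmm
        have := hwle i
        omega
      refine Submodule.add_mem _ (Submodule.add_mem _ ?_ ?_) ?_ <;>
        exact JacAux.lbSub_mul_right (key _) _
    · intro p hp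
      rw [Submodule.restrictScalars_mem, Ideal.mem_span_singleton] at hp
      obtain ⟨h, rfl⟩ := hp
      have hQmem : Q ∈ JacAux.lbSub w b := by
        intro mm hmm
        have := hQ (MvPolynomial.mem_support_iff.mp hmm)
        omega
      exact JacAux.lbSub_mul_right hQmem h
  -- now extract l and m
  have hco : ∀ i : Fin 3, MvPolynomial.coeff (Finsupp.single i 1)
      (C l * X 0 + C m * X 1 : MvPolynomial (Fin 3) ℂ)
      = l * (if i = 0 then 1 else 0) + m * (if i = 1 then 1 else 0) := by
    intro i
    rw [MvPolynomial.coeff_add, MvPolynomial.coeff_C_mul, MvPolynomial.coeff_C_mul,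
      MvPolynomial.coeff_X', MvPolynomial.coeff_X']
    congr 2 <;> simp [Finsupp.single_eq_single_iff, eq_comm]
  have hwi : ∀ i : Fin 3, Finsupp.weight w (Finsupp.single i 1) = w i := by
    intro i; simp [Finsupp.weight_apply, Finsupp.sum_single_index]
  constructor
  · by_contra hl
    have : (Finsupp.single (0 : Fin 3) 1) ∈
        (C l * X 0 + C m * X 1 : MvPolynomial (Fin 3) ℂ).support := by
      rw [MvPolynomial.mem_support_iff, hco 0]
      simpa using hl
    have := hK _ this
    rw [hwi 0, hw0] at this
    omega
  · by_contra hm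
    have : (Finsupp.single (1 : Fin 3) 1) ∈
        (C l * X 0 + C m * X 1 : MvPolynomial (Fin 3) ℂ).support := by
      rw [MvPolynomial.mem_support_iff, hco 1]
      simpa using hm
    have := hK _ this
    rw [hwi 1, hw1] at this
    omega
end

section
/- Let Q ∈ ℂ[x,y,z] be irreducible, with Q_z ∉ (Q), and suppose the only common zero in ℂ³ of Q, Q_x, Q_y, Q_z is the origin (0,0,0). If f ∈ ℂ[x,y,z] satisfies Q_x·f ∈ (Q, Q_z) and Q_y·f ∈ (Q, Q_z), then f ∈ (Q, Q_z). -/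
open MvPolynomial

private lemma primeX3 (i : Fin 3) : Prime (X i : MvPolynomial (Fin 3) ℂ) := by
  have h0 : Prime (X 0 : MvPolynomial (Fin 3) ℂ) := by
    rw [← MulEquiv.prime_iff (finSuccEquiv ℂ 2).toMulEquiv]
    simpa [finSuccEquiv_X_zero] using (Polynomial.prime_X (R := MvPolynomial (Fin 2) ℂ))
  have := (MulEquiv.prime_iff (renameEquiv ℂ (Equiv.swap i 0)).toMulEquiv (p := (X i : MvPolynomial (Fin 3) ℂ))).symm
  rw [this]
  simpa using h0

private lemma XndvdX3 {i j : Fin 3} (h : i ≠ j) :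
    ¬ (X i : MvPolynomial (Fin 3) ℂ) ∣ X j := by
  rintro ⟨c, hc⟩
  have := congrArg (eval (fun k => if k = j then (1:ℂ) else 0)) hc
  simp [h] at this

private noncomputable def sig : MvPolynomial (Fin 3) ℂ →ₐ[ℂ] MvPolynomial (Fin 3) ℂ :=
  aeval (fun i => if i = 2 then 0 else X i)

private lemma sig_X0 : sig (X 0) = X 0 := by simp [sig]
private lemma sig_X1 : sig (X 1) = X 1 := by simp [sig]
private lemma sig_X2 : sig (X 2) = 0 := by simp [sig]

private lemma z_dvd_sub_sig (p : MvPolynomial (Fin 3) ℂ) :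
    (X 2 : MvPolynomial (Fin 3) ℂ) ∣ p - sig p := by
  induction p using MvPolynomial.induction_on with
  | C a => simp [sig]
  | add p q hp hq =>
    have := dvd_add hp hq
    rw [map_add]
    convert this using 1
    ring
  | mul_X p i hp =>
    rw [map_mul]
    rcases eq_or_ne i 2 with h | h
    · subst h
      rw [sig_X2, mul_zero, sub_zero]
      exact Dvd.intro_left p rfl
    · have hXi : sig (X i) = X i := by simp [sig, h]
      rw [hXi]
      have : p * X i - sig p * X i = (p - sig p) * X i := by ring
      rw [this]
      exact hp.mul_right _

private lemma key3 (Q P g : MvPolynomial (Fin 3) ℂ) (hQ : Prime Q) (hndvd : ¬ Q ∣ P)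
    (h0 : X 0 * g ∈ Ideal.span {Q, P}) (h1 : X 1 * g ∈ Ideal.span {Q, P})
    (h2 : X 2 * g ∈ Ideal.span {Q, P}) : g ∈ Ideal.span {Q, P} := by
  have hPne : P ≠ 0 := fun h => hndvd (h ▸ dvd_zero Q)
  have hQne : Q ≠ 0 := hQ.ne_zero
  obtain ⟨a1, b1, e1⟩ := Ideal.mem_span_pair.mp h0
  obtain ⟨a2, b2, e2⟩ := Ideal.mem_span_pair.mp h1
  obtain ⟨a3, b3, e3⟩ := Ideal.mem_span_pair.mp h2
  -- c3 from pair (0,1)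
  have d3 : Q ∣ (X 0 * b2 - X 1 * b1) * P :=
    ⟨X 1 * a1 - X 0 * a2, by linear_combination X 0 * e2 - X 1 * e1⟩
  obtain ⟨c3, hc3⟩ := (hQ.dvd_mul.mp d3).resolve_right hndvd
  have ha3 : X 1 * a1 - X 0 * a2 = c3 * P := by
    apply mul_left_cancel₀ hQne
    linear_combination X 1 * e1 - X 0 * e2 + P * hc3
  -- c2 from pair (0,2)
  have d2 : Q ∣ (X 0 * b3 - X 2 * b1) * P :=
    ⟨X 2 * a1 - X 0 * a3, by linear_combination X 0 * e3 - X 2 * e1⟩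
  obtain ⟨c2, hc2⟩ := (hQ.dvd_mul.mp d2).resolve_right hndvd
  have ha2 : X 2 * a1 - X 0 * a3 = c2 * P := by
    apply mul_left_cancel₀ hQne
    linear_combination X 2 * e1 - X 0 * e3 + P * hc2
  -- c1 from pair (1,2)
  have d1 : Q ∣ (X 1 * b3 - X 2 * b2) * P :=
    ⟨X 2 * a2 - X 1 * a3, by linear_combination X 1 * e3 - X 2 * e2⟩
  obtain ⟨c1, hc1⟩ := (hQ.dvd_mul.mp d1).resolve_right hndvd
  have ha1 : X 2 * a2 - X 1 * a3 = c1 * P := by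
    apply mul_left_cancel₀ hQne
    linear_combination X 2 * e2 - X 1 * e3 + P * hc1
  -- compatibility
  have hcomp : X 0 * c1 - X 1 * c2 + X 2 * c3 = 0 := by
    have h : (X 0 * c1 - X 1 * c2 + X 2 * c3) * P = 0 := by
      linear_combination X 1 * ha2 - X 0 * ha1 - X 2 * ha3
    exact (mul_eq_zero.mp h).resolve_right hPne
  -- Koszul syzygy of (x,y,z)
  have hs := congrArg sig hcomp
  rw [map_add, map_sub, map_mul, map_mul, map_mul, sig_X0, sig_X1, sig_X2, map_zero] at hs
  have hy1 : (X 1 : MvPolynomial (Fin 3) ℂ) ∣ X 0 * sig c1 :=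
    ⟨sig c2, by linear_combination hs⟩
  obtain ⟨u, hu⟩ := ((primeX3 1).dvd_mul.mp hy1).resolve_left (XndvdX3 (by decide))
  obtain ⟨v, hv⟩ := z_dvd_sub_sig c1
  have hc1' : c1 = X 1 * u + X 2 * v := by linear_combination hv + hu
  have hz1 : (X 2 : MvPolynomial (Fin 3) ℂ) ∣ X 1 * (c2 - X 0 * u) :=
    ⟨X 0 * v + c3, by linear_combination -hcomp + X 0 * hc1'⟩
  obtain ⟨w, hw⟩ := ((primeX3 2).dvd_mul.mp hz1).resolve_left (XndvdX3 (by decide))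
  have hc2' : c2 = X 0 * u + X 2 * w := by linear_combination hw
  have hc3' : c3 = X 1 * w - X 0 * v := by
    apply mul_left_cancel₀ (primeX3 2).ne_zero
    linear_combination hcomp - X 0 * hc1' + X 1 * hc2'
  -- extract h and k
  have hxa : (X 0 : MvPolynomial (Fin 3) ℂ) ∣ X 1 * (a1 - w * P) :=
    ⟨a2 - v * P, by linear_combination ha3 + P * hc3'⟩
  obtain ⟨h, hh⟩ := ((primeX3 0).dvd_mul.mp hxa).resolve_left (XndvdX3 (by decide))
  have hxb : (X 0 : MvPolynomial (Fin 3) ℂ) ∣ X 1 * (b1 + w * Q) :=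
    ⟨b2 + v * Q, by linear_combination -hc3 - Q * hc3'⟩
  obtain ⟨k, hk⟩ := ((primeX3 0).dvd_mul.mp hxb).resolve_left (XndvdX3 (by decide))
  have hfin : X 0 * g = X 0 * (h * Q + k * P) := by
    linear_combination -e1 + Q * hh + P * hk
  exact Ideal.mem_span_pair.mpr ⟨h, k, (mul_left_cancel₀ (primeX3 0).ne_zero hfin).symm⟩

private lemma keypow3 (Q P : MvPolynomial (Fin 3) ℂ) (hQ : Prime Q) (hndvd : ¬ Q ∣ P) :
    ∀ (N : ℕ) (g : MvPolynomial (Fin 3) ℂ),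
      (∀ a b c : ℕ, a + b + c = N → X 0 ^ a * X 1 ^ b * X 2 ^ c * g ∈ Ideal.span {Q, P}) →
      g ∈ Ideal.span {Q, P} := by
  intro N
  induction N with
  | zero =>
    intro g hg
    simpa using hg 0 0 0 rfl
  | succ n ih =>
    intro g hg
    apply ih
    intro a b c habc
    apply key3 Q P _ hQ hndvd
    · have := hg (a + 1) b c (by omega)
      have he : X 0 * (X 0 ^ a * X 1 ^ b * X 2 ^ c * g)
          = X 0 ^ (a + 1) * X 1 ^ b * X 2 ^ c * g := by ring
      rwa [he]
    · have := hg a (b + 1) c (by omega)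
      have he : X 1 * (X 0 ^ a * X 1 ^ b * X 2 ^ c * g)
          = X 0 ^ a * X 1 ^ (b + 1) * X 2 ^ c * g := by ring
      rwa [he]
    · have := hg a b (c + 1) (by omega)
      have he : X 2 * (X 0 ^ a * X 1 ^ b * X 2 ^ c * g)
          = X 0 ^ a * X 1 ^ b * X 2 ^ (c + 1) * g := by ring
      rwa [he]

theorem stmt3 (Q : MvPolynomial (Fin 3) ℂ) (hirr : Irreducible Q)
    (hQz : pderiv 2 Q ∉ Ideal.span {Q})
    (hiso : ∀ p : Fin 3 → ℂ, eval p Q = 0 → eval p (pderiv 0 Q) = 0 →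
      eval p (pderiv 1 Q) = 0 → eval p (pderiv 2 Q) = 0 → p = 0)
    (f : MvPolynomial (Fin 3) ℂ)
    (hx : pderiv 0 Q * f ∈ Ideal.span {Q, pderiv 2 Q})
    (hy : pderiv 1 Q * f ∈ Ideal.span {Q, pderiv 2 Q}) :
    f ∈ Ideal.span {Q, pderiv 2 Q} := by
  have hQp : Prime Q := UniqueFactorizationMonoid.irreducible_iff_prime.mp hirr
  have hndvd : ¬ Q ∣ pderiv 2 Q := fun h => hQz (Ideal.mem_span_singleton.mpr h)
  set I : Ideal (MvPolynomial (Fin 3) ℂ) := Ideal.span {Q, pderiv 2 Q} with hI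
  set J : Ideal (MvPolynomial (Fin 3) ℂ) := I.colon (Ideal.span {f}) with hJ
  set K : Ideal (MvPolynomial (Fin 3) ℂ) :=
    Ideal.span {Q, pderiv 0 Q, pderiv 1 Q, pderiv 2 Q} with hK
  have hQI : Q ∈ I := Ideal.subset_span (Set.mem_insert _ _)
  have hQzI : pderiv 2 Q ∈ I := Ideal.subset_span (Set.mem_insert_of_mem _ rfl)
  have hKJ : K ≤ J := by
    rw [hK, Ideal.span_le]
    rintro q hq
    simp only [Set.mem_insert_iff, Set.mem_singleton_iff] at hq
    rcases hq with rfl | rfl | rfl | rfl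
    · exact Ideal.mem_colon_span_singleton.mpr (Ideal.mul_mem_right f I hQI)
    · exact Ideal.mem_colon_span_singleton.mpr hx
    · exact Ideal.mem_colon_span_singleton.mpr hy
    · exact Ideal.mem_colon_span_singleton.mpr (Ideal.mul_mem_right f I hQzI)
  have hXrad : ∀ i : Fin 3, (X i : MvPolynomial (Fin 3) ℂ) ∈ J.radical := by
    intro i
    apply Ideal.radical_mono hKJ
    rw [← vanishingIdeal_zeroLocus_eq_radical (K := ℂ)]
    rw [mem_vanishingIdeal_iff]
    intro p hp
    rw [mem_zeroLocus_iff] at hp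
    have hp0 : p = 0 := by
      apply hiso p
      · exact hp Q (Ideal.subset_span (Set.mem_insert _ _))
      · exact hp _ (Ideal.subset_span (Set.mem_insert_of_mem _ (Set.mem_insert _ _)))
      · exact hp _ (Ideal.subset_span
          (Set.mem_insert_of_mem _ (Set.mem_insert_of_mem _ (Set.mem_insert _ _))))
      · exact hp _ (Ideal.subset_span
          (Set.mem_insert_of_mem _ (Set.mem_insert_of_mem _ (Set.mem_insert_of_mem _ rfl))))
    rw [aeval_X, hp0]
    rfl
  obtain ⟨n0, hn0⟩ := Ideal.mem_radical_iff.mp (hXrad 0)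
  obtain ⟨n1, hn1⟩ := Ideal.mem_radical_iff.mp (hXrad 1)
  obtain ⟨n2, hn2⟩ := Ideal.mem_radical_iff.mp (hXrad 2)
  apply keypow3 Q (pderiv 2 Q) hQp hndvd (n0 + n1 + n2) f
  intro a b c habc
  have hcase : n0 ≤ a ∨ n1 ≤ b ∨ n2 ≤ c := by omega
  have hm0 : X 0 ^ n0 * f ∈ I := Ideal.mem_colon_span_singleton.mp hn0
  have hm1 : X 1 ^ n1 * f ∈ I := Ideal.mem_colon_span_singleton.mp hn1
  have hm2 : X 2 ^ n2 * f ∈ I := Ideal.mem_colon_span_singleton.mp hn2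
  rcases hcase with hle | hle | hle
  · obtain ⟨d, rfl⟩ : ∃ d, a = n0 + d := ⟨a - n0, by omega⟩
    have he : X 0 ^ (n0 + d) * X 1 ^ b * X 2 ^ c * f
        = (X 0 ^ d * X 1 ^ b * X 2 ^ c) * (X 0 ^ n0 * f) := by
      rw [pow_add]; ring
    rw [he]
    exact Ideal.mul_mem_left I _ hm0
  · obtain ⟨d, rfl⟩ : ∃ d, b = n1 + d := ⟨b - n1, by omega⟩
    have he : X 0 ^ a * X 1 ^ (n1 + d) * X 2 ^ c * f
        = (X 0 ^ a * X 1 ^ d * X 2 ^ c) * (X 1 ^ n1 * f) := by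
      rw [pow_add]; ring
    rw [he]
    exact Ideal.mul_mem_left I _ hm1
  · obtain ⟨d, rfl⟩ : ∃ d, c = n2 + d := ⟨c - n2, by omega⟩
    have he : X 0 ^ a * X 1 ^ b * X 2 ^ (n2 + d) * f
        = (X 0 ^ a * X 1 ^ b * X 2 ^ d) * (X 2 ^ n2 * f) := by
      rw [pow_add]; ring
    rw [he]
    exact Ideal.mul_mem_left I _ hm2
end

section
/- Let Q ∈ ℂ[x,y,z] be irreducible with Q_z ∉ (Q), and let j ≥ 0 be an integer. Then { ∂g/∂z : g ∈ (Q) } ∩ (Q^j) = { ∂h/∂z : h ∈ (Q^{j+1}) }; that is, the z-derivative of an element of the ideal (Q) lies in the ideal (Q^j) if and only if it is the z-derivative of an element of the ideal (Q^{j+1}). -/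
open MvPolynomial

private lemma pderiv_mul_pow (Q a : MvPolynomial (Fin 3) ℂ) (n : ℕ) :
    pderiv 2 (a * Q ^ n) =
      pderiv 2 a * Q ^ n + (n : MvPolynomial (Fin 3) ℂ) * a * Q ^ (n - 1) * pderiv 2 Q := by
  rw [Derivation.leibniz, Derivation.leibniz_pow]
  simp only [smul_eq_mul, nsmul_eq_mul]; ring

private lemma key (Q : MvPolynomial (Fin 3) ℂ) (hprime : Prime Q)
    (hQz : ¬ Q ∣ pderiv 2 Q) :
    ∀ j : ℕ, ∀ g : MvPolynomial (Fin 3) ℂ, Q ∣ g → Q ^ j ∣ pderiv 2 g →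
      ∃ h, Q ^ (j + 1) ∣ h ∧ pderiv 2 h = pderiv 2 g := by
  intro j
  induction j with
  | zero => intro g hg _; exact ⟨g, by simpa using hg, rfl⟩
  | succ j ih =>
    intro g hg hdg
    obtain ⟨h, ⟨b, rfl⟩, hd⟩ := ih g hg (dvd_trans (pow_dvd_pow Q (Nat.le_succ j)) hdg)
    rw [mul_comm] at hd
    -- hd : pderiv 2 (b * Q^(j+1)) = pderiv 2 g
    have hdvd : Q ^ (j + 1) ∣ (↑(j + 1) : MvPolynomial (Fin 3) ℂ) * b * Q ^ j * pderiv 2 Q := by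
      have h1 : Q ^ (j + 1) ∣ pderiv 2 (b * Q ^ (j + 1)) := hd ▸ hdg
      rw [pderiv_mul_pow] at h1
      have h2 := dvd_sub h1 (Dvd.intro_left (pderiv 2 b) rfl)
      simpa using h2
    have hQ0 : Q ^ j ≠ 0 := pow_ne_zero _ hprime.ne_zero
    have h2 : Q ∣ (↑(j + 1) : MvPolynomial (Fin 3) ℂ) * b * pderiv 2 Q := by
      have : Q ^ j * Q ∣ Q ^ j * ((↑(j + 1) : MvPolynomial (Fin 3) ℂ) * b * pderiv 2 Q) := by
        rw [← pow_succ]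
        convert hdvd using 1; ring
      exact (mul_dvd_mul_iff_left hQ0).mp this
    have hunit : IsUnit ((↑(j + 1) : MvPolynomial (Fin 3) ℂ)) := by
      rw [← map_natCast (C : ℂ →+* MvPolynomial (Fin 3) ℂ) (j + 1)]
      exact (isUnit_iff_ne_zero.2 (by exact_mod_cast Nat.succ_ne_zero j)).map C
    have hQb : Q ∣ b := by
      rcases (hprime.dvd_mul.mp h2) with h3 | h3
      · rcases hprime.dvd_mul.mp h3 with h4 | h4
        · exact absurd (isUnit_of_dvd_unit h4 hunit) hprime.not_unit
        · exact h4
      · exact absurd h3 hQz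
    obtain ⟨c, rfl⟩ := hQb
    exact ⟨Q ^ (j + 1 + 1) * c, ⟨c, rfl⟩, by rw [← hd]; ring_nf⟩

theorem stmt5 (Q : MvPolynomial (Fin 3) ℂ) (hirr : Irreducible Q)
    (hQz : pderiv 2 Q ∉ Ideal.span {Q}) (j : ℕ) :
    {p : MvPolynomial (Fin 3) ℂ | ∃ g ∈ Ideal.span {Q}, pderiv 2 g = p} ∩
        (Ideal.span {Q ^ j} : Ideal (MvPolynomial (Fin 3) ℂ)) =
      {p : MvPolynomial (Fin 3) ℂ | ∃ h ∈ Ideal.span {Q ^ (j + 1)}, pderiv 2 h = p} := by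
  have hprime : Prime Q := hirr.prime
  rw [Ideal.mem_span_singleton] at hQz
  ext p
  simp only [Set.mem_inter_iff, Set.mem_setOf_eq, SetLike.mem_coe,
    Ideal.mem_span_singleton]
  constructor
  · rintro ⟨⟨g, hg, rfl⟩, hp⟩
    obtain ⟨h, hh, hd⟩ := key Q hprime hQz j g hg hp
    exact ⟨h, hh, hd⟩
  · rintro ⟨h, ⟨b, rfl⟩, rfl⟩
    refine ⟨⟨Q ^ (j + 1) * b, ⟨Q ^ j * b, by ring⟩, rfl⟩, ?_⟩
    rw [mul_comm, pderiv_mul_pow]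
    refine dvd_add ⟨pderiv 2 b * Q, by ring⟩ ?_
    exact ⟨(↑(j + 1) : MvPolynomial (Fin 3) ℂ) * b * pderiv 2 Q, by simp; ring⟩
end

section
/- Let Q ∈ ℂ[x,y,z] be irreducible and weighted-homogeneous of degree d with respect to the weights a, b, c, with Q_z ∉ (Q). Let f ∈ ℂ[x,y,z] be weighted-homogeneous of degree m ≥ 1 and suppose Q_z·f_x − Q_x·f_z ∈ (Q) and Q_z·f_y − Q_y·f_z ∈ (Q). Then f ∈ (Q). (Equivalently, the joint kernel of the tangential derivations D_x and D_y on homogeneous elements of positive degree of ℂ[x,y,z]/(Q) is zero.) -/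
open MvPolynomial

lemma euler_mono (w : Fin 3 → ℕ) (s : Fin 3 →₀ ℕ) (r : ℂ) (i : Fin 3) :
    C (w i : ℂ) * (X i * pderiv i (monomial s r)) = monomial s (((w i * s i : ℕ) : ℂ) * r) := by
  rw [pderiv_monomial]
  by_cases h : s i = 0
  · simp [h]
  · rw [X, monomial_mul, one_mul, C_mul_monomial]
    rw [add_tsub_cancel_of_le (Finsupp.single_le_iff.2 (Nat.one_le_iff_ne_zero.2 h))]
    congr 1
    push_cast; ring

lemma euler (w : Fin 3 → ℕ) (m : ℕ) (f : MvPolynomial (Fin 3) ℂ)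
    (hf : f.IsWeightedHomogeneous w m) :
    ∑ i, C (w i : ℂ) * (X i * pderiv i f) = C (m : ℂ) * f := by
  conv_lhs => rw [← f.support_sum_monomial_coeff]
  conv_rhs => rw [← f.support_sum_monomial_coeff]
  simp only [map_sum, Finset.mul_sum]
  rw [Finset.sum_comm]
  refine Finset.sum_congr rfl fun s hs => ?_
  simp only [euler_mono, ← map_sum, C_mul_monomial]
  congr 1
  rw [← Finset.sum_mul, ← Nat.cast_sum]
  congr 2
  have h := hf (mem_support_iff.1 hs)
  rw [Finsupp.weight_apply, Finsupp.sum_fintype] at h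
  · rw [← h]; exact Finset.sum_congr rfl fun i _ => by rw [smul_eq_mul, mul_comm]
  · intro i; simp

theorem stmt8 (a b c d m : ℕ) (ha : 0 < a) (hb : 0 < b) (hc : 0 < c) (hm : 1 ≤ m)
    (Q : MvPolynomial (Fin 3) ℂ) (hirr : Irreducible Q)
    (hQ : Q.IsWeightedHomogeneous ![a, b, c] d)
    (hQz : pderiv 2 Q ∉ Ideal.span {Q})
    (f : MvPolynomial (Fin 3) ℂ) (hf : f.IsWeightedHomogeneous ![a, b, c] m)
    (hx : pderiv 2 Q * pderiv 0 f - pderiv 0 Q * pderiv 2 f ∈ Ideal.span {Q})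
    (hy : pderiv 2 Q * pderiv 1 f - pderiv 1 Q * pderiv 2 f ∈ Ideal.span {Q}) :
    f ∈ Ideal.span {Q} := by
  set I := Ideal.span {Q} with hI
  have hQmem : Q ∈ I := Ideal.mem_span_singleton_self Q
  have e1 := euler ![a, b, c] m f hf
  have e2 := euler ![a, b, c] d Q hQ
  rw [Fin.sum_univ_three] at e1 e2
  simp only [Matrix.cons_val_zero, Matrix.cons_val_one, Matrix.head_cons,
    Matrix.cons_val_two, Matrix.tail_cons] at e1 e2
  have key : C (m : ℂ) * (pderiv 2 Q * f) ∈ I := by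
    have heq : C (m : ℂ) * (pderiv 2 Q * f) =
        C (a : ℂ) * X 0 * (pderiv 2 Q * pderiv 0 f - pderiv 0 Q * pderiv 2 f)
        + C (b : ℂ) * X 1 * (pderiv 2 Q * pderiv 1 f - pderiv 1 Q * pderiv 2 f)
        + pderiv 2 f * (C (d : ℂ) * Q) := by
      linear_combination pderiv 2 f * e2 - pderiv 2 Q * e1
    rw [heq]
    exact I.add_mem (I.add_mem (I.mul_mem_left _ hx) (I.mul_mem_left _ hy))
      (I.mul_mem_left _ (I.mul_mem_left _ hQmem))
  have hm0 : (m : ℂ) ≠ 0 := Nat.cast_ne_zero.2 (by omega)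
  have key2 : pderiv 2 Q * f ∈ I := by
    have := I.mul_mem_left (C (m : ℂ)⁻¹) key
    rwa [← mul_assoc, ← C_mul, inv_mul_cancel₀ hm0, C_1, one_mul] at this
  have hP : I.IsPrime := (Ideal.span_singleton_prime hirr.ne_zero).2 hirr.prime
  rcases hP.mem_or_mem key2 with h | h
  · exact absurd h hQz
  · exact h
end

section
/- Let A be a commutative ℂ-algebra equipped with a Poisson bracket, and let S ⊆ A be a subset that generates A as a unital commutative ℂ-algebra. Then the ℂ-linear span of all brackets {a,b} with a, b ∈ A equals the ℂ-linear span of all brackets {s,a} with s ∈ S and a ∈ A; in symbols, {A, A} = {S, A}. -/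
/-- If `S` generates the commutative ℂ-algebra `A` (as a unital commutative algebra), and
`{·,·}` is a Poisson bracket on `A`, then `{A, A} = {S, A}` as ℂ-linear spans. -/
theorem stmt10 (A : Type*) [CommRing A] [Algebra ℂ A]
    (br : A →ₗ[ℂ] A →ₗ[ℂ] A)
    (anti : ∀ a b : A, br a b = - br b a)
    (leib : ∀ a b c : A, br a (b * c) = br a b * c + b * br a c)
    (jac : ∀ a b c : A, br a (br b c) = br (br a b) c + br b (br a c))
    (S : Set A) (hS : Algebra.adjoin ℂ S = ⊤) :
    Submodule.span ℂ {p : A | ∃ a b : A, br a b = p} =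
      Submodule.span ℂ {p : A | ∃ s ∈ S, ∃ a : A, br s a = p} := by
  set M := Submodule.span ℂ {p : A | ∃ s ∈ S, ∃ a : A, br s a = p} with hM
  -- bracket with 1 vanishes
  have h1 : ∀ b : A, br b 1 = 0 := by
    intro b
    have h := leib b 1 1
    simp only [mul_one, one_mul] at h
    linear_combination (-1 : A) * h
  have h1' : ∀ b : A, br (1 : A) b = 0 := by
    intro b
    rw [anti, h1, neg_zero]
  -- key identity: {x*y, b} = {x, y*b} + {y, x*b}
  have keymul : ∀ x y b : A, br (x * y) b = br x (y * b) + br y (x * b) := by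
    intro x y b
    linear_combination (anti (x * y) b) - (leib b x y) - (leib x y b) - (leib y x b)
      - b * (anti x y) - y * (anti b x) - x * (anti b y)
  -- every bracket lies in M
  have key : ∀ a b : A, br a b ∈ M := by
    intro a
    have ha : a ∈ Algebra.adjoin ℂ S := by rw [hS]; trivial
    induction ha using Algebra.adjoin_induction with
    | mem s hs =>
        intro b
        exact Submodule.subset_span ⟨s, hs, b, rfl⟩
    | algebraMap c =>
        intro b
        have : algebraMap ℂ A c = c • (1 : A) := by
          rw [Algebra.smul_def, mul_one]
        rw [this, map_smul, LinearMap.smul_apply, h1' b, smul_zero]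
        exact M.zero_mem
    | add x y hx hy ihx ihy =>
        intro b
        rw [map_add, LinearMap.add_apply]
        exact M.add_mem (ihx b) (ihy b)
    | mul x y hx hy ihx ihy =>
        intro b
        rw [keymul x y b]
        exact M.add_mem (ihx (y * b)) (ihy (x * b))
  apply le_antisymm
  · rw [Submodule.span_le]
    rintro p ⟨a, b, rfl⟩
    exact key a b
  · apply Submodule.span_mono
    rintro p ⟨s, hs, a, rfl⟩
    exact ⟨s, a, rfl⟩
end

section
/- Let A be a commutative ℂ-algebra equipped with a Poisson bracket, and let S ⊆ A be a subset that generates A as a Poisson algebra, i.e., the smallest ℂ-subalgebra of A containing S and closed under the bracket is A itself. Then the ℂ-linear span of all brackets {a,b} with a, b ∈ A equals the ℂ-linear span of all brackets {s,a} with s ∈ S and a ∈ A; in symbols, {A, A} = {S, A}. -/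
/-- If `S` generates the commutative ℂ-algebra `A` as a *Poisson* algebra (i.e. every
ℂ-subalgebra containing `S` and closed under the bracket is all of `A`), then
`{A, A} = {S, A}` as ℂ-linear spans. -/
theorem stmt11 (A : Type*) [CommRing A] [Algebra ℂ A]
    (br : A →ₗ[ℂ] A →ₗ[ℂ] A)
    (anti : ∀ a b : A, br a b = - br b a)
    (leib : ∀ a b c : A, br a (b * c) = br a b * c + b * br a c)
    (jac : ∀ a b c : A, br a (br b c) = br (br a b) c + br b (br a c))
    (S : Set A)
    (hS : ∀ T : Subalgebra ℂ A, S ⊆ T → (∀ a ∈ T, ∀ b ∈ T, br a b ∈ T) → T = ⊤) :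
    Submodule.span ℂ {p : A | ∃ a b : A, br a b = p} =
      Submodule.span ℂ {p : A | ∃ s ∈ S, ∃ a : A, br s a = p} := by
  set M := Submodule.span ℂ {p : A | ∃ s ∈ S, ∃ a : A, br s a = p} with hM
  -- {·, 1} = 0
  have h1 : ∀ y : A, br y 1 = 0 := by
    intro y
    have h := leib y 1 1
    rw [mul_one, mul_one, one_mul] at h
    exact (right_eq_add.mp h)
  have h1' : ∀ y : A, br 1 y = 0 := by
    intro y; rw [anti 1 y, h1 y, neg_zero]
  -- key product identity: {x*y, z} = {x, y*z} + {y, x*z}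
  have prod_id : ∀ x y z : A, br (x * y) z = br x (y * z) + br y (x * z) := by
    intro x y z
    have e1 := anti (x * y) z
    have e2 := leib z x y
    have e3 := leib x y z
    have e4 := leib y x z
    have e5 := anti z x
    have e6 := anti z y
    have e7 := anti x y
    linear_combination e1 - e2 - e3 - e4 - y * e5 - x * e6 - z * e7
  -- the subalgebra of elements x with {x, A} ⊆ M
  let T : Subalgebra ℂ A :=
    { carrier := {x : A | ∀ y : A, br x y ∈ M}
      mul_mem' := by
        intro x y hx hy z
        rw [prod_id x y z]
        exact add_mem (hx (y * z)) (hy (x * z))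
      one_mem' := by
        intro y
        rw [h1' y]
        exact zero_mem M
      add_mem' := by
        intro x y hx hy z
        rw [map_add, LinearMap.add_apply]
        exact add_mem (hx z) (hy z)
      zero_mem' := by
        intro y
        rw [map_zero, LinearMap.zero_apply]
        exact zero_mem M
      algebraMap_mem' := by
        intro c y
        rw [Algebra.algebraMap_eq_smul_one, map_smul, LinearMap.smul_apply, h1' y,
          smul_zero]
        exact zero_mem M }
  have hST : S ⊆ (T : Set A) := by
    intro s hs y
    exact Submodule.subset_span ⟨s, hs, y, rfl⟩
  have hbrT : ∀ a ∈ T, ∀ b ∈ T, br a b ∈ T := by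
    intro a ha b hb z
    have key : br (br a b) z = br a (br b z) - br b (br a z) := by
      have := jac a b z
      linear_combination -this
    rw [key]
    exact sub_mem (ha (br b z)) (hb (br a z))
  have hTtop := hS T hST hbrT
  have key : ∀ x y : A, br x y ∈ M := by
    intro x y
    have hx : x ∈ T := hTtop ▸ Algebra.mem_top
    exact hx y
  apply le_antisymm
  · rw [Submodule.span_le]
    rintro p ⟨a, b, rfl⟩
    exact key a b
  · apply Submodule.span_mono
    rintro p ⟨s, _, a, rfl⟩
    exact ⟨s, a, rfl⟩
end

section
/- Let m ≥ 2 be an integer. In ℂ[x,y] with the Poisson bracket {f,g} := f_x·g_y − f_y·g_x, let A be the ℂ-subalgebra generated by x^m, x·y, and y^m (the invariants of the ℤ/m-action). Let B be the ℂ-linear span of { {y^m, f} : f ∈ A } and let C be the ℂ-linear span of the monomials x^{m·j}·(x·y)^i for j ≥ 0 and 0 ≤ i ≤ m−2. Then B ⊆ A, B ∩ C = 0, and B + C = A; that is, C is a complement to { y^m, A } inside A. -/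
open MvPolynomial

/-- The standard symplectic Poisson bracket `{f,g} = f_x g_y − f_y g_x` on `ℂ[x,y]`. -/
noncomputable def stdBracket (f g : MvPolynomial (Fin 2) ℂ) : MvPolynomial (Fin 2) ℂ :=
  pderiv 0 f * pderiv 1 g - pderiv 1 f * pderiv 0 g

namespace Stmt13Aux

noncomputable abbrev Mon (p q : ℕ) : MvPolynomial (Fin 2) ℂ := X 0 ^ p * X 1 ^ q

lemma mon_eq_monomial (p q : ℕ) :
    Mon p q = monomial (Finsupp.single 0 p + Finsupp.single 1 q) 1 := by
  rw [Mon, X_pow_eq_monomial, X_pow_eq_monomial, monomial_mul, one_mul]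

lemma fs0 (p q : ℕ) : (Finsupp.single (0:Fin 2) p + Finsupp.single 1 q) - Finsupp.single 0 1
    = Finsupp.single 0 (p-1) + Finsupp.single 1 q := by
  ext a
  fin_cases a <;> simp [Finsupp.tsub_apply, Finsupp.single_apply]

lemma fs1 (m : ℕ) : (Finsupp.single (1:Fin 2) m) - Finsupp.single 1 1
    = Finsupp.single 1 (m-1) := by
  ext a
  fin_cases a <;> simp [Finsupp.tsub_apply, Finsupp.single_apply]

lemma pderiv0_mon (p q : ℕ) :
    pderiv 0 (Mon p q) = monomial (Finsupp.single 0 (p-1) + Finsupp.single 1 q) (p : ℂ) := by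
  rw [mon_eq_monomial, pderiv_monomial, fs0]
  simp

lemma pderiv1_Xm (m : ℕ) :
    pderiv 1 ((X 1 : MvPolynomial (Fin 2) ℂ) ^ m) = monomial (Finsupp.single 1 (m-1)) (m : ℂ) := by
  rw [X_pow_eq_monomial, pderiv_monomial, fs1]
  simp

lemma pderiv0_Xm (m : ℕ) :
    pderiv 0 ((X 1 : MvPolynomial (Fin 2) ℂ) ^ m) = 0 := by
  rw [X_pow_eq_monomial, pderiv_monomial]
  simp

lemma bracket_mon (m p q : ℕ) :
    stdBracket ((X 1)^ m) (Mon p q) = (-((m:ℂ) * p)) • Mon (p-1) (q+(m-1)) := by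
  have hE : Finsupp.single (1:Fin 2) (m-1) + (Finsupp.single 0 (p-1) + Finsupp.single 1 q)
      = Finsupp.single 0 (p-1) + Finsupp.single 1 (q+(m-1)) := by
    rw [Finsupp.single_add]
    abel
  rw [stdBracket, pderiv0_Xm, pderiv1_Xm, pderiv0_mon, monomial_mul, zero_mul, zero_sub,
    mon_eq_monomial, smul_monomial, hE, ← map_neg, smul_eq_mul, mul_one]

/-- the bracket with `y^m` as a linear map -/
noncomputable def brkt (m : ℕ) : MvPolynomial (Fin 2) ℂ →ₗ[ℂ] MvPolynomial (Fin 2) ℂ where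
  toFun f := stdBracket ((X 1) ^ m) f
  map_add' f g := by simp only [stdBracket, map_add]; ring
  map_smul' c f := by
    simp only [stdBracket, map_smul, Derivation.map_smul, RingHom.id_apply, smul_sub, mul_smul_comm]

def SA (m : ℕ) : Set (MvPolynomial (Fin 2) ℂ) :=
  {f | ∃ p q : ℕ, p ≡ q [MOD m] ∧ Mon p q = f}

def SB (m : ℕ) : Set (MvPolynomial (Fin 2) ℂ) :=
  {f | ∃ p q : ℕ, (p ≡ q [MOD m] ∧ m - 1 ≤ q) ∧ Mon p q = f}

def SC (m : ℕ) : Set (MvPolynomial (Fin 2) ℂ) :=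
  {f | ∃ p q : ℕ, (p ≡ q [MOD m] ∧ q ≤ m - 2) ∧ Mon p q = f}

lemma monA {m p q : ℕ} (h : p ≡ q [MOD m]) :
    Mon p q ∈ Algebra.adjoin ℂ
      {(X 0 : MvPolynomial (Fin 2) ℂ) ^ m, X 0 * X 1, X 1 ^ m} := by
  have h1 : (X 0 : MvPolynomial (Fin 2) ℂ) ^ m ∈ Algebra.adjoin ℂ
      {(X 0 : MvPolynomial (Fin 2) ℂ) ^ m, X 0 * X 1, X 1 ^ m} :=
    Algebra.subset_adjoin (by simp)
  have h2 : (X 0 : MvPolynomial (Fin 2) ℂ) * X 1 ∈ Algebra.adjoin ℂ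
      {(X 0 : MvPolynomial (Fin 2) ℂ) ^ m, X 0 * X 1, X 1 ^ m} :=
    Algebra.subset_adjoin (by simp)
  have h3 : (X 1 : MvPolynomial (Fin 2) ℂ) ^ m ∈ Algebra.adjoin ℂ
      {(X 0 : MvPolynomial (Fin 2) ℂ) ^ m, X 0 * X 1, X 1 ^ m} :=
    Algebra.subset_adjoin (by simp)
  rcases le_total p q with hle | hle
  · obtain ⟨k, hk⟩ := (Nat.modEq_iff_dvd' hle).mp h
    have hq : q = p + m * k := by omega
    have : Mon p q = (X 0 * X 1) ^ p * ((X 1 : MvPolynomial (Fin 2) ℂ) ^ m) ^ k := by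
      rw [Mon, hq, pow_add, pow_mul, mul_pow]
      ring
    rw [this]
    exact mul_mem (pow_mem h2 p) (pow_mem h3 k)
  · obtain ⟨k, hk⟩ := (Nat.modEq_iff_dvd' hle).mp h.symm
    have hp : p = q + m * k := by omega
    have : Mon p q = (X 0 * X 1) ^ q * ((X 0 : MvPolynomial (Fin 2) ℂ) ^ m) ^ k := by
      rw [Mon, hp, pow_add, pow_mul, mul_pow]
      ring
    rw [this]
    exact mul_mem (pow_mem h2 q) (pow_mem h1 k)

lemma spanA (m : ℕ) (hm : 1 ≤ m) :
    Subalgebra.toSubmodule (Algebra.adjoin ℂ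
      {(X 0 : MvPolynomial (Fin 2) ℂ) ^ m, X 0 * X 1, X 1 ^ m})
    = Submodule.span ℂ (SA m) := by
  apply le_antisymm
  · have h1 : (1 : MvPolynomial (Fin 2) ℂ) ∈ Submodule.span ℂ (SA m) := by
      apply Submodule.subset_span
      exact ⟨0, 0, Nat.ModEq.refl 0, by simp [Mon]⟩
    have hmul : ∀ x y : MvPolynomial (Fin 2) ℂ, x ∈ Submodule.span ℂ (SA m) →
        y ∈ Submodule.span ℂ (SA m) → x * y ∈ Submodule.span ℂ (SA m) := by
      intro x y hx hy
      have h := Submodule.mul_mem_mul hx hy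
      rw [Submodule.span_mul_span] at h
      refine Submodule.span_le.mpr ?_ h
      rintro _ ⟨a, ha, b, hb, rfl⟩
      obtain ⟨p, q, hpq, rfl⟩ := ha
      obtain ⟨p', q', hpq', rfl⟩ := hb
      exact Submodule.subset_span ⟨p + p', q + q', hpq.add hpq',
        (by simp only [Mon, pow_add]; ring)⟩
    have key : Algebra.adjoin ℂ {(X 0 : MvPolynomial (Fin 2) ℂ) ^ m, X 0 * X 1, X 1 ^ m}
        ≤ (Submodule.span ℂ (SA m)).toSubalgebra h1 hmul := by
      apply Algebra.adjoin_le
      intro g hg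
      simp only [Set.mem_insert_iff, Set.mem_singleton_iff] at hg
      rcases hg with rfl | rfl | rfl
      · exact Submodule.subset_span ⟨m, 0, Nat.modEq_zero_iff_dvd.mpr dvd_rfl, by simp [Mon]⟩
      · exact Submodule.subset_span ⟨1, 1, Nat.ModEq.refl 1, by simp [Mon]⟩
      · exact Submodule.subset_span ⟨0, m, (Nat.modEq_zero_iff_dvd.mpr dvd_rfl).symm,
          by simp [Mon]⟩
    intro x hx
    exact key hx
  · rw [Submodule.span_le]
    rintro _ ⟨p, q, hpq, rfl⟩
    exact monA hpq

lemma coeff_span {P : ℕ → ℕ → Prop} {f : MvPolynomial (Fin 2) ℂ}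
    (hf : f ∈ Submodule.span ℂ {g | ∃ p q : ℕ, P p q ∧ Mon p q = g})
    {d : Fin 2 →₀ ℕ} (hd : coeff d f ≠ 0) :
    ∃ p q : ℕ, P p q ∧ d = Finsupp.single 0 p + Finsupp.single 1 q := by
  induction hf using Submodule.span_induction with
  | mem g hg =>
    obtain ⟨p, q, hPpq, rfl⟩ := hg
    refine ⟨p, q, hPpq, ?_⟩
    rw [mon_eq_monomial, coeff_monomial] at hd
    by_cases he : Finsupp.single (0 : Fin 2) p + Finsupp.single 1 q = d
    · exact he.symm
    · simp [he] at hd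
  | zero => simp at hd
  | add x y hx hy ihx ihy =>
    rw [coeff_add] at hd
    by_cases h : coeff d x = 0
    · exact ihy (by simpa [h] using hd)
    · exact ihx h
  | smul a x hx ihx =>
    rw [coeff_smul] at hd
    exact ihx (by intro h; rw [h] at hd; simp at hd)

end Stmt13Aux

open Stmt13Aux in
theorem stmt13 (m : ℕ) (hm : 2 ≤ m)
    (A : Subalgebra ℂ (MvPolynomial (Fin 2) ℂ))
    (hA : A = Algebra.adjoin ℂ
      {(X 0 : MvPolynomial (Fin 2) ℂ) ^ m, X 0 * X 1, X 1 ^ m})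
    (B C : Submodule ℂ (MvPolynomial (Fin 2) ℂ))
    (hB : B = Submodule.span ℂ
      {p : MvPolynomial (Fin 2) ℂ | ∃ f ∈ A, stdBracket (X 1 ^ m) f = p})
    (hC : C = Submodule.span ℂ
      {p : MvPolynomial (Fin 2) ℂ |
        ∃ j i : ℕ, i ≤ m - 2 ∧ (X 0 : MvPolynomial (Fin 2) ℂ) ^ (m * j) * (X 0 * X 1) ^ i = p}) :
    B ≤ Subalgebra.toSubmodule A ∧ B ⊓ C = ⊥ ∧ B ⊔ C = Subalgebra.toSubmodule A := by
  have hm1 : 1 ≤ m := by omega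
  -- B = span of SB
  have hBspan : B = Submodule.span ℂ (SB m) := by
    rw [hB]
    apply le_antisymm
    · rw [Submodule.span_le]
      rintro _ ⟨f, hf, rfl⟩
      rw [hA] at hf
      have hf' : f ∈ Submodule.span ℂ (SA m) := by
        rw [← spanA m hm1]; exact hf
      have : stdBracket (X 1 ^ m) f = brkt m f := rfl
      rw [this]
      have hmem : brkt m f ∈ Submodule.map (brkt m) (Submodule.span ℂ (SA m)) :=
        Submodule.mem_map_of_mem hf'
      rw [Submodule.map_span] at hmem
      refine Submodule.span_le.mpr ?_ hmem
      rintro _ ⟨_, ⟨p, q, hpq, rfl⟩, rfl⟩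
      show stdBracket ((X 1) ^ m) (Mon p q) ∈ Submodule.span ℂ (SB m)
      rw [bracket_mon]
      rcases Nat.eq_zero_or_pos p with rfl | hp
      · simp
      · refine Submodule.smul_mem _ _ (Submodule.subset_span ⟨p - 1, q + (m - 1), ⟨?_, ?_⟩, rfl⟩)
        · calc p - 1 ≡ (p - 1) + m [MOD m] := (Nat.add_modEq_right).symm
            _ = p + (m - 1) := by omega
            _ ≡ q + (m - 1) [MOD m] := hpq.add_right _
        · omega
    · rw [Submodule.span_le]
      rintro _ ⟨p, q, ⟨hpq, hq⟩, rfl⟩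
      have hfA : Mon (p + 1) (q - (m - 1)) ∈ A := by
        rw [hA]
        apply monA
        calc p + 1 ≡ q + 1 [MOD m] := hpq.add_right 1
          _ = (q - (m - 1)) + m := by omega
          _ ≡ q - (m - 1) [MOD m] := Nat.add_modEq_right
      have hbr : stdBracket ((X 1) ^ m) (Mon (p + 1) (q - (m - 1)))
          = (-((m:ℂ) * (p + 1))) • Mon p q := by
        rw [bracket_mon, show p + 1 - 1 = p from rfl,
          show q - (m - 1) + (m - 1) = q by omega]
        push_cast
        ring_nf
      have hne : (-((m:ℂ) * (p + 1))) ≠ 0 := by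
        simp only [neg_ne_zero]
        apply mul_ne_zero
        · exact_mod_cast (by omega : m ≠ 0)
        · exact_mod_cast (Nat.succ_ne_zero p)
      have hmem : (-((m:ℂ) * (p + 1))) • Mon p q ∈ Submodule.span ℂ
          {g : MvPolynomial (Fin 2) ℂ | ∃ f ∈ A, stdBracket (X 1 ^ m) f = g} := by
        apply Submodule.subset_span
        exact ⟨Mon (p + 1) (q - (m - 1)), hfA, hbr⟩
      have := Submodule.smul_mem _ (-((m:ℂ) * (p + 1)))⁻¹ hmem
      rwa [smul_smul, inv_mul_cancel₀ hne, one_smul] at this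
  -- C = span of SC
  have hCspan : C = Submodule.span ℂ (SC m) := by
    rw [hC]
    congr 1
    ext f
    constructor
    · rintro ⟨j, i, hi, rfl⟩
      refine ⟨m * j + i, i, ⟨?_, hi⟩, ?_⟩
      · have : m * j ≡ 0 [MOD m] := Nat.modEq_zero_iff_dvd.mpr ⟨j, rfl⟩
        simpa using this.add_right i
      · rw [Mon, mul_pow, pow_add]; ring
    · rintro ⟨p, q, ⟨hpq, hq⟩, rfl⟩
      have hqp : q ≤ p := by
        by_contra hlt
        push_neg at hlt
        obtain ⟨k, hk⟩ := (Nat.modEq_iff_dvd' hlt.le).mp hpq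
        rcases Nat.eq_zero_or_pos k with rfl | hk0
        · omega
        · have : m ≤ q - p := hk ▸ Nat.le_mul_of_pos_right m hk0
          omega
      obtain ⟨k, hk⟩ := (Nat.modEq_iff_dvd' hqp).mp hpq.symm
      refine ⟨k, q, hq, ?_⟩
      have hp : p = q + m * k := by omega
      rw [Mon, hp, mul_pow, pow_add]
      ring
  refine ⟨?_, ?_, ?_⟩
  · -- B ≤ A
    rw [hBspan, hA, spanA m hm1]
    apply Submodule.span_mono
    rintro _ ⟨p, q, ⟨hpq, _⟩, rfl⟩
    exact ⟨p, q, hpq, rfl⟩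
  · -- B ⊓ C = ⊥
    rw [eq_bot_iff]
    rintro x ⟨hxB, hxC⟩
    rw [hBspan] at hxB
    rw [hCspan] at hxC
    rw [Submodule.mem_bot]
    ext d
    rw [coeff_zero]
    by_contra hd
    obtain ⟨p, q, ⟨_, hq⟩, hd1⟩ := coeff_span (P := fun p q => p ≡ q [MOD m] ∧ m - 1 ≤ q) hxB hd
    obtain ⟨p', q', ⟨_, hq'⟩, hd2⟩ := coeff_span (P := fun p q => p ≡ q [MOD m] ∧ q ≤ m - 2) hxC hd
    have h1 : d 1 = q := by
      rw [hd1]; simp [Finsupp.single_apply]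
    have h2 : d 1 = q' := by
      rw [hd2]; simp [Finsupp.single_apply]
    omega
  · -- B ⊔ C = A
    rw [hBspan, hCspan, hA, spanA m hm1, ← Submodule.span_union]
    congr 1
    ext f
    constructor
    · rintro (⟨p, q, ⟨hpq, _⟩, rfl⟩ | ⟨p, q, ⟨hpq, _⟩, rfl⟩) <;> exact ⟨p, q, hpq, rfl⟩
    · rintro ⟨p, q, hpq, rfl⟩
      rcases le_or_gt (m - 1) q with h | h
      · exact Or.inl ⟨p, q, ⟨hpq, h⟩, rfl⟩
      · exact Or.inr ⟨p, q, ⟨hpq, by omega⟩, rfl⟩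
end
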